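/- The function d ↦ P^{(∞)}(d,E) is continuous and monotone increasing on the real interval (1,∞). -/

import Mathlib

open Filter Topology

/-- A probability vector indexed by the alphabet `A`. -/
def IsProbVec {A : Type*} [Fintype A] (π : A → ℝ) : Prop :=
  (∀ a, 0 ≤ π a) ∧ ∑ a, π a = 1

/-- A column-stochastic matrix: nonnegative entries, each column sums to `1`. -/
def IsColStochastic {A : Type*} [Fintype A] (P : Matrix A A ℝ) : Prop :=
  (∀ a b, 0 ≤ P a b) ∧ ∀ b, ∑ a, P a b = 1

/-- Assumption (A): `E` has nonnegative entries with all column sums and row sums positive. -/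
def AssumptionA {A : Type*} [Fintype A] (E : Matrix A A ℝ) : Prop :=
  (∀ a b, 0 ≤ E a b) ∧ (∀ b, 0 < ∑ a, E a b) ∧ (∀ a, 0 < ∑ b, E a b)

/-- The feasible domain of Problem 1: sequences of probability vectors and
column-stochastic matrices with `P j a b = 0` whenever `E a b = 0` and
`π j = P j • π (j+1)`. -/
def Feasible {A : Type*} [Fintype A] (E : Matrix A A ℝ)
    (π : ℕ → A → ℝ) (P : ℕ → Matrix A A ℝ) : Prop :=
  (∀ j, IsProbVec (π j)) ∧ (∀ j, IsColStochastic (P j)) ∧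
    (∀ j a b, E a b = 0 → P j a b = 0) ∧ (∀ j, π j = (P j).mulVec (π (j + 1)))

/-- The objective function of Problem 1 (the convention `0 · log (0/0) = 0` is automatic
since `Real.log (x / 0) * 0 = 0`). -/
noncomputable def Finf {A : Type*} [Fintype A] (E : Matrix A A ℝ) (d : ℝ)
    (π : ℕ → A → ℝ) (P : ℕ → Matrix A A ℝ) : ℝ :=
  ∑' j : ℕ, ((d - 1) / d ^ (j + 1)) *
    ∑ a, ∑ b, π (j + 1) a * P (j + 1) b a * Real.log (E b a / P (j + 1) b a)

/-- `P^{(∞)}(d,E)`: the maximum of Problem 1. -/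
noncomputable def Pinf {A : Type*} [Fintype A] (E : Matrix A A ℝ) (d : ℝ) : ℝ :=
  sSup {x : ℝ | ∃ π P, Feasible E π P ∧ x = Finf E d π P}

namespace Stmt0Aux

noncomputable def W (d : ℝ) (j : ℕ) : ℝ := (d - 1) / d ^ (j + 1)

lemma W_eq {d : ℝ} (hd : 0 < d) (j : ℕ) : W d j = ((d - 1) / d) * (1 / d) ^ j := by
  unfold W
  rw [div_pow, one_pow, pow_succ]
  rw [div_mul_div_comm]
  congr 1
  · ring
  · ring

lemma W_nonneg {d : ℝ} (hd : 1 < d) (j : ℕ) : 0 ≤ W d j := by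
  unfold W
  apply div_nonneg (by linarith) (pow_nonneg (by linarith) _)

lemma summable_W {d : ℝ} (hd : 1 < d) : Summable (W d) := by
  have h0 : (0:ℝ) ≤ 1 / d := by positivity
  have h1 : 1 / d < 1 := by rw [div_lt_one (by linarith)]; linarith
  have := (summable_geometric_of_lt_one h0 h1).mul_left ((d - 1) / d)
  exact this.congr fun j => (W_eq (by linarith) j).symm

lemma tsum_W {d : ℝ} (hd : 1 < d) : ∑' j, W d j = 1 := by
  have h0 : (0:ℝ) ≤ 1 / d := by positivity
  have h1 : 1 / d < 1 := by rw [div_lt_one (by linarith)]; linarith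
  have hd0 : d ≠ 0 := by linarith
  calc ∑' j, W d j = ∑' j, ((d - 1) / d) * (1 / d) ^ j := by
        exact tsum_congr fun j => W_eq (by linarith) j
    _ = ((d - 1) / d) * (1 - 1 / d)⁻¹ := by rw [tsum_mul_left, tsum_geometric_of_lt_one h0 h1]
    _ = 1 := by
        rw [show 1 - 1 / d = (d - 1) / d by field_simp]
        rw [inv_div, div_mul_div_comm, mul_comm]
        rw [div_self (by intro h; apply hd0; nlinarith [mul_eq_zero.1 h] : d * (d-1) ≠ 0)]

lemma W_succ {d : ℝ} (hd : 0 < d) (j : ℕ) : W d (j + 1) = W d j * (1 / d) := by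
  rw [W_eq hd, W_eq hd, pow_succ]; ring


variable {A : Type*} [Fintype A]

noncomputable def T (E : Matrix A A ℝ) (π : ℕ → A → ℝ) (P : ℕ → Matrix A A ℝ) (j : ℕ) : ℝ :=
  ∑ a, ∑ b, π j a * P j b a * Real.log (E b a / P j b a)

lemma Finf_eq (E : Matrix A A ℝ) (d : ℝ) (π : ℕ → A → ℝ) (P : ℕ → Matrix A A ℝ) :
    Finf E d π P = ∑' j, W d j * T E π P (j + 1) := rfl

noncomputable def B (E : Matrix A A ℝ) : ℝ := ∑ a, ∑ b, (|Real.log (E b a)| + 1)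

lemma B_nonneg (E : Matrix A A ℝ) : 0 ≤ B E := by
  apply Finset.sum_nonneg; intro a _; apply Finset.sum_nonneg; intro b _; positivity

lemma entry_bound {E : Matrix A A ℝ} (hE : AssumptionA E) {v : A → ℝ} {Q : Matrix A A ℝ}
    (hv : IsProbVec v) (hQ : IsColStochastic Q) (hQE : ∀ a b, E a b = 0 → Q a b = 0)
    (a b : A) :
    |v a * Q b a * Real.log (E b a / Q b a)| ≤ |Real.log (E b a)| + 1 := by
  have hv0 : 0 ≤ v a := hv.1 a
  have hv1 : v a ≤ 1 := by
    have := Finset.single_le_sum (f := v) (fun i _ => hv.1 i) (Finset.mem_univ a)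
    rw [hv.2] at this; exact this
  have hq0 : 0 ≤ Q b a := hQ.1 b a
  have hq1 : Q b a ≤ 1 := by
    have := Finset.single_le_sum (f := fun i => Q i a) (fun i _ => hQ.1 i a)
      (Finset.mem_univ b)
    rw [hQ.2 a] at this; exact this
  rcases eq_or_lt_of_le hq0 with h | hq
  · rw [← h]
    simp
    positivity
  · have he0 : E b a ≠ 0 := by
      intro h0
      have := hQE b a h0
      rw [this] at hq; exact lt_irrefl _ hq
    have he : 0 < E b a := lt_of_le_of_ne (hE.1 b a) (Ne.symm he0)
    rw [Real.log_div he.ne' hq.ne']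
    have key : Q b a * |Real.log (Q b a)| ≤ 1 - Q b a := by
      rw [abs_of_nonpos (Real.log_nonpos hq0 hq1)]
      have h1 := Real.log_le_sub_one_of_pos (inv_pos.2 hq)
      rw [Real.log_inv] at h1
      have h2 := mul_le_mul_of_nonneg_left h1 hq0
      calc Q b a * -Real.log (Q b a) ≤ Q b a * ((Q b a)⁻¹ - 1) := h2
        _ = 1 - Q b a := by field_simp
    have habs : |Real.log (E b a) - Real.log (Q b a)| ≤ |Real.log (E b a)| + |Real.log (Q b a)| :=
      abs_sub (Real.log (E b a)) (Real.log (Q b a))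
    calc |v a * Q b a * (Real.log (E b a) - Real.log (Q b a))|
        = v a * Q b a * |Real.log (E b a) - Real.log (Q b a)| := by
          rw [abs_mul, abs_of_nonneg (mul_nonneg hv0 hq0)]
      _ ≤ |Real.log (E b a)| + 1 := by
          have h1 := mul_le_mul_of_nonneg_left habs hq0
          have h2 := mul_le_of_le_one_left (abs_nonneg (Real.log (E b a))) hq1
          have h3 := mul_le_of_le_one_left
            (mul_nonneg hq0 (abs_nonneg (Real.log (E b a) - Real.log (Q b a)))) hv1
          nlinarith [abs_nonneg (Real.log (E b a)), abs_nonneg (Real.log (Q b a)), hq0]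

lemma term_bound {E : Matrix A A ℝ} (hE : AssumptionA E) {v : A → ℝ} {Q : Matrix A A ℝ}
    (hv : IsProbVec v) (hQ : IsColStochastic Q) (hQE : ∀ a b, E a b = 0 → Q a b = 0) :
    |∑ a, ∑ b, v a * Q b a * Real.log (E b a / Q b a)| ≤ B E := by
  calc |∑ a, ∑ b, v a * Q b a * Real.log (E b a / Q b a)|
      ≤ ∑ a, |∑ b, v a * Q b a * Real.log (E b a / Q b a)| := Finset.abs_sum_le_sum_abs _ _
    _ ≤ ∑ a, ∑ b, |v a * Q b a * Real.log (E b a / Q b a)| :=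
        Finset.sum_le_sum fun a _ => Finset.abs_sum_le_sum_abs _ _
    _ ≤ B E := Finset.sum_le_sum fun a _ => Finset.sum_le_sum fun b _ =>
        entry_bound hE hv hQ hQE a b


lemma exists_feasible [Nonempty A] {E : Matrix A A ℝ} (hE : AssumptionA E) :
    ∃ π P, Feasible E π P := by
  classical
  letI : DecidableEq A := Classical.decEq A
  have hcol : ∀ b, ∃ a, 0 < E a b := by
    intro b
    by_contra h
    push_neg at h
    have h0 : ∀ a ∈ Finset.univ, E a b ≤ 0 := fun a _ => h a
    exact absurd (hE.2.1 b) (not_lt.2 (Finset.sum_nonpos h0))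
  choose f hf using hcol
  obtain ⟨a⟩ := ‹Nonempty A›
  -- find a periodic point of f
  obtain ⟨m, n, hmn, heq⟩ : ∃ m n : ℕ, m < n ∧ f^[m] a = f^[n] a := by
    obtain ⟨m, n, hne, he⟩ := Finite.exists_ne_map_eq_of_infinite (fun n : ℕ => f^[n] a)
    rcases lt_or_gt_of_ne hne with h | h
    · exact ⟨m, n, h, he⟩
    · exact ⟨n, m, h, he.symm⟩
  set p := n - m with hp
  have hp0 : 0 < p := by omega
  set a₀ := f^[m] a with ha₀def
  have ha₀ : f^[p] a₀ = a₀ := by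
    rw [ha₀def, ← Function.iterate_add_apply, hp]
    rw [show n - m + m = n by omega]
    exact heq.symm
  set x : ℕ → A := fun j => f^[(p - 1) * j] a₀ with hxdef
  have hx : ∀ j, f (x (j + 1)) = x j := by
    intro j
    have h1 : (p - 1) * (j + 1) + 1 = (p - 1) * j + p := by
      rw [Nat.mul_succ]; omega
    calc f (x (j + 1)) = f^[(p - 1) * (j + 1) + 1] a₀ := by
          rw [hxdef]; rw [Function.iterate_succ_apply']
      _ = f^[(p - 1) * j + p] a₀ := by rw [h1]
      _ = f^[(p - 1) * j] (f^[p] a₀) := by rw [Function.iterate_add_apply]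
      _ = x j := by rw [ha₀]
  refine ⟨fun j a' => if a' = x j then 1 else 0,
    fun _ => Matrix.of fun a' b => if a' = f b then 1 else 0, ?_, ?_, ?_, ?_⟩
  · intro j
    constructor
    · intro a'; dsimp; split <;> norm_num
    · simp
  · intro j
    constructor
    · intro a' b; simp only [Matrix.of_apply]; split <;> norm_num
    · intro b; simp [Matrix.of_apply]
  · intro j a' b hEab
    simp only [Matrix.of_apply]
    split
    · rename_i h; subst h; exact absurd hEab (hf b).ne'
    · rfl
  · intro j
    funext a'
    simp only [Matrix.mulVec, dotProduct, Matrix.of_apply]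
    have hterm : ∀ b, ((if a' = f b then (1:ℝ) else 0) * (if b = x (j+1) then 1 else 0))
        = (if b = x (j+1) then (if a' = f b then (1:ℝ) else 0) else 0) := by
      intro b; split <;> simp
    rw [Finset.sum_congr rfl fun b _ => hterm b]
    rw [Finset.sum_ite_eq' Finset.univ (x (j+1)) (fun b => if a' = f b then (1:ℝ) else 0)]
    simp [hx j]


section Mix
variable {d d' : ℝ}

noncomputable def al (d d' : ℝ) : ℕ → ℝ := fun k =>
  if k = 0 then ((d - 1) / d) / ((d' - 1) / d')
  else (((d - 1) / d) / ((d' - 1) / d')) * ((1 / d - 1 / d') * (1 / d) ^ (k - 1))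

lemma al_succ (d d' : ℝ) (k : ℕ) :
    al d d' (k + 1) = (((d - 1) / d) / ((d' - 1) / d')) * ((1 / d - 1 / d') * (1 / d) ^ k) := by
  simp [al]

lemma al_nonneg (hd : 1 < d) (hdd' : d < d') (k : ℕ) : 0 ≤ al d d' k := by
  have h1 : (0:ℝ) ≤ ((d - 1) / d) / ((d' - 1) / d') := by
    apply div_nonneg (div_nonneg (by linarith) (by linarith))
      (div_nonneg (by linarith) (by linarith))
  have h2 : 1 / d' ≤ 1 / d := by
    apply one_div_le_one_div_of_le (by linarith) (by linarith)
  cases k with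
  | zero => simpa [al] using h1
  | succ k =>
    rw [al_succ]
    apply mul_nonneg h1 (mul_nonneg (by linarith) (pow_nonneg (by positivity) _))

lemma summable_al (hd : 1 < d) (hdd' : d < d') : Summable (al d d') := by
  rw [← summable_nat_add_iff 1]
  have h0 : (0:ℝ) ≤ 1 / d := by positivity
  have h1 : 1 / d < 1 := by rw [div_lt_one (by linarith)]; linarith
  have := ((summable_geometric_of_lt_one h0 h1).mul_left
    ((((d - 1) / d) / ((d' - 1) / d')) * (1 / d - 1 / d')))
  exact this.congr fun k => by rw [al_succ]; ring

lemma tsum_al (hd : 1 < d) (hdd' : d < d') : ∑' k, al d d' k = 1 := by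
  have hd0 : (0:ℝ) < d := by linarith
  have hd'0 : (0:ℝ) < d' := by linarith
  have h0 : (0:ℝ) ≤ 1 / d := by positivity
  have h1 : 1 / d < 1 := by rw [div_lt_one (by linarith)]; linarith
  rw [(summable_al hd hdd').tsum_eq_zero_add]
  have h2 : ∑' k : ℕ, al d d' (k + 1)
      = (((d - 1) / d) / ((d' - 1) / d')) * (1 / d - 1 / d') * (1 - 1 / d)⁻¹ := by
    calc ∑' k : ℕ, al d d' (k + 1)
        = ∑' k : ℕ, ((((d - 1) / d) / ((d' - 1) / d')) * (1 / d - 1 / d')) * (1 / d) ^ k :=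
          tsum_congr fun k => by rw [al_succ]; ring
      _ = _ := by rw [tsum_mul_left, tsum_geometric_of_lt_one h0 h1]
  rw [h2]
  show al d d' 0 + _ = 1
  rw [show al d d' 0 = ((d - 1) / d) / ((d' - 1) / d') from by simp [al]]
  rw [show (1:ℝ) - 1 / d = (d - 1) / d from by field_simp]
  have hne1 : d - 1 ≠ 0 := by linarith
  have hne2 : d' - 1 ≠ 0 := by linarith
  field_simp
  ring

lemma W_mix (hd : 1 < d) (hdd' : d < d') (j : ℕ) :
    W d j = ∑ k ∈ Finset.range (j + 1), al d d' k * W d' (j - k) := by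
  have hd0 : (0:ℝ) < d := by linarith
  have hd'0 : (0:ℝ) < d' := by linarith
  have hd'1 : 1 < d' := by linarith
  have hne2 : d' - 1 ≠ 0 := by linarith
  induction j with
  | zero =>
      rw [Finset.sum_range_one]
      show W d 0 = al d d' 0 * W d' 0
      rw [show al d d' 0 = ((d - 1) / d) / ((d' - 1) / d') from by simp [al]]
      unfold W
      rw [pow_one, pow_one]
      field_simp
  | succ j ih =>
      rw [Finset.sum_range_succ]
      have hstep : ∀ k ∈ Finset.range (j + 1),
          al d d' k * W d' (j + 1 - k) = (al d d' k * W d' (j - k)) * (1 / d') := by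
        intro k hk
        have hkj : k ≤ j := by simpa [Nat.lt_succ_iff] using hk
        rw [show j + 1 - k = (j - k) + 1 by omega, W_succ hd'0]
        ring
      rw [Finset.sum_congr rfl hstep, ← Finset.sum_mul, ← ih]
      rw [Nat.sub_self]
      rw [W_eq hd0 (j + 1), W_eq hd0 j, al_succ]
      unfold W
      rw [pow_one, pow_succ]
      field_simp
      ring
  end Mix



section Main
variable {E : Matrix A A ℝ} {π : ℕ → A → ℝ} {P : ℕ → Matrix A A ℝ} {d d' : ℝ}

lemma T_bound (hE : AssumptionA E) (h : Feasible E π P) (j : ℕ) : |T E π P j| ≤ B E :=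
  term_bound hE (h.1 j) (h.2.1 j) (fun a b hab => h.2.2.1 j a b hab)

lemma summable_main (hd : 1 < d) (hE : AssumptionA E) (h : Feasible E π P) :
    Summable (fun j => W d j * T E π P (j + 1)) := by
  apply Summable.of_norm_bounded (g := fun j => W d j * B E) ((summable_W hd).mul_right _)
  intro j
  rw [Real.norm_eq_abs, abs_mul, abs_of_nonneg (W_nonneg hd j)]
  exact mul_le_mul_of_nonneg_left (T_bound hE h (j + 1)) (W_nonneg hd j)

lemma Finf_abs_le (hd : 1 < d) (hE : AssumptionA E) (h : Feasible E π P) :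
    |Finf E d π P| ≤ B E := by
  have hb : ∀ j, ‖W d j * T E π P (j + 1)‖ ≤ W d j * B E := by
    intro j
    rw [Real.norm_eq_abs, abs_mul, abs_of_nonneg (W_nonneg hd j)]
    exact mul_le_mul_of_nonneg_left (T_bound hE h (j + 1)) (W_nonneg hd j)
  have hs : Summable (fun j => ‖W d j * T E π P (j + 1)‖) :=
    Summable.of_nonneg_of_le (fun j => norm_nonneg _) hb ((summable_W hd).mul_right _)
  calc |Finf E d π P| = ‖∑' j, W d j * T E π P (j + 1)‖ := by rw [Finf_eq, Real.norm_eq_abs]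
    _ ≤ ∑' j, ‖W d j * T E π P (j + 1)‖ := norm_tsum_le_tsum_norm hs
    _ ≤ ∑' j, W d j * B E := Summable.tsum_le_tsum hb hs ((summable_W hd).mul_right _)
    _ = (∑' j, W d j) * B E := tsum_mul_right
    _ = B E := by rw [tsum_W hd, one_mul]

lemma bddAbove_S (hd : 1 < d) (hE : AssumptionA E) :
    BddAbove {x : ℝ | ∃ π P, Feasible E π P ∧ x = Finf E d π P} := by
  refine ⟨B E, ?_⟩
  rintro x ⟨π, P, hf, rfl⟩
  exact (abs_le.1 (Finf_abs_le hd hE hf)).2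

lemma Finf_le_Pinf (hd : 1 < d) (hE : AssumptionA E) (h : Feasible E π P) :
    Finf E d π P ≤ Pinf E d :=
  le_csSup (bddAbove_S hd hE) ⟨π, P, h, rfl⟩

lemma shift_feasible (h : Feasible E π P) (k : ℕ) :
    Feasible E (fun j => π (j + k)) (fun j => P (j + k)) := by
  refine ⟨fun j => h.1 _, fun j => h.2.1 _, fun j => h.2.2.1 _, fun j => ?_⟩
  have := h.2.2.2 (j + k)
  show π (j + k) = (P (j + k)).mulVec (π (j + 1 + k))
  rw [show j + 1 + k = j + k + 1 by omega]
  exact this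

/-- The antidiagonal equivalence. -/
def sigEquiv : (Σ j : ℕ, Fin (j + 1)) ≃ ℕ × ℕ where
  toFun s := (s.2.1, s.1 - s.2.1)
  invFun p := ⟨p.1 + p.2, ⟨p.1, by omega⟩⟩
  left_inv := by
    rintro ⟨j, k, hk⟩
    apply Sigma.ext
    · simp; omega
    · rw [Fin.heq_ext_iff (by simp; omega)]
  right_inv := by
    rintro ⟨k, m⟩
    simp

lemma Finf_le_Pinf_of_lt (hE : AssumptionA E) (hd : 1 < d) (hdd' : d < d')
    (h : Feasible E π P) : Finf E d π P ≤ Pinf E d' := by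
  have hd' : 1 < d' := hd.trans hdd'
  have hT : ∀ j, |T E π P j| ≤ B E := fun j => T_bound hE h j
  have hBnn : (0:ℝ) ≤ B E := (abs_nonneg _).trans (hT 0)
  have husum : Summable (fun p : ℕ × ℕ =>
      al d d' p.1 * (W d' p.2 * T E π P (p.2 + p.1 + 1))) := by
    have hmaj : Summable (fun p : ℕ × ℕ => al d d' p.1 * (W d' p.2 * B E)) :=
      Summable.mul_of_nonneg (f := al d d') (g := fun m => W d' m * B E)
        (summable_al hd hdd') ((summable_W hd').mul_right _)
        (fun k => al_nonneg hd hdd' k)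
        (fun m => mul_nonneg (W_nonneg hd' m) hBnn)
    apply Summable.of_norm_bounded hmaj
    intro p
    rw [Real.norm_eq_abs, abs_mul, abs_mul, abs_of_nonneg (al_nonneg hd hdd' p.1),
      abs_of_nonneg (W_nonneg hd' p.2)]
    exact mul_le_mul_of_nonneg_left
      (mul_le_mul_of_nonneg_left (hT _) (W_nonneg hd' p.2)) (al_nonneg hd hdd' p.1)
  have hvsum : Summable ((fun p : ℕ × ℕ =>
      al d d' p.1 * (W d' p.2 * T E π P (p.2 + p.1 + 1))) ∘ sigEquiv) :=
    (Equiv.summable_iff sigEquiv).2 husum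
  have hshift : ∀ k : ℕ, ∑' m, (W d' m * T E π P (m + k + 1)) =
      Finf E d' (fun j => π (j + k)) (fun j => P (j + k)) := by
    intro k
    rw [Finf_eq]
    apply tsum_congr
    intro m
    have h1 : T E (fun j => π (j + k)) (fun j => P (j + k)) (m + 1) = T E π P (m + 1 + k) := rfl
    rw [h1, show m + 1 + k = m + k + 1 from by omega]
  calc Finf E d π P = ∑' j, W d j * T E π P (j + 1) := Finf_eq E d π P
    _ = ∑' j, ∑ k ∈ Finset.range (j + 1), al d d' k * (W d' (j - k) * T E π P (j + 1)) := by
        apply tsum_congr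
        intro j
        rw [W_mix hd hdd' j, Finset.sum_mul]
        exact Finset.sum_congr rfl fun k _ => by ring
    _ = ∑' j, ∑' (k : Fin (j + 1)), (fun p : ℕ × ℕ =>
          al d d' p.1 * (W d' p.2 * T E π P (p.2 + p.1 + 1))) (sigEquiv ⟨j, k⟩) := by
        apply tsum_congr
        intro j
        rw [tsum_fintype,
          ← Fin.sum_univ_eq_sum_range (fun k => al d d' k * (W d' (j - k) * T E π P (j + 1))) (j + 1)]
        apply Finset.sum_congr rfl
        intro k _
        show al d d' k.1 * (W d' (j - k.1) * T E π P (j + 1))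
          = al d d' k.1 * (W d' (j - k.1) * T E π P ((j - k.1) + k.1 + 1))
        rw [show (j - k.1) + k.1 + 1 = j + 1 from by omega]
    _ = ∑' (s : Σ j : ℕ, Fin (j + 1)), (fun p : ℕ × ℕ =>
          al d d' p.1 * (W d' p.2 * T E π P (p.2 + p.1 + 1))) (sigEquiv s) :=
        (hvsum.tsum_sigma).symm
    _ = ∑' p : ℕ × ℕ, al d d' p.1 * (W d' p.2 * T E π P (p.2 + p.1 + 1)) :=
        sigEquiv.tsum_eq (fun p : ℕ × ℕ => al d d' p.1 * (W d' p.2 * T E π P (p.2 + p.1 + 1)))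
    _ = ∑' k, ∑' m, al d d' k * (W d' m * T E π P (m + k + 1)) := husum.tsum_prod
    _ = ∑' k, al d d' k * Finf E d' (fun j => π (j + k)) (fun j => P (j + k)) := by
        apply tsum_congr
        intro k
        rw [← hshift k, ← tsum_mul_left]
    _ ≤ ∑' k, al d d' k * Pinf E d' := by
        apply Summable.tsum_le_tsum
        · intro k
          exact mul_le_mul_of_nonneg_left
            (Finf_le_Pinf hd' hE (shift_feasible h k)) (al_nonneg hd hdd' k)
        · apply Summable.of_norm_bounded (g := fun k => al d d' k * B E)
            ((summable_al hd hdd').mul_right _)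
          intro k
          rw [Real.norm_eq_abs, abs_mul, abs_of_nonneg (al_nonneg hd hdd' k)]
          exact mul_le_mul_of_nonneg_left
            (Finf_abs_le hd' hE (shift_feasible h k)) (al_nonneg hd hdd' k)
        · exact (summable_al hd hdd').mul_right _
    _ = Pinf E d' := by rw [tsum_mul_right, tsum_al hd hdd', one_mul]

end Main

lemma pow_abs_sub_le {x y ρ : ℝ} (hx : 0 ≤ x) (hx' : x ≤ ρ) (hy : 0 ≤ y) (hy' : y ≤ ρ)
    (j : ℕ) : |x ^ j - y ^ j| ≤ (j : ℝ) * ρ ^ (j - 1) * |x - y| := by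
  rw [← geom_sum₂_mul, abs_mul]
  apply mul_le_mul_of_nonneg_right _ (abs_nonneg _)
  calc |∑ i ∈ Finset.range j, x ^ i * y ^ (j - 1 - i)|
      ≤ ∑ i ∈ Finset.range j, |x ^ i * y ^ (j - 1 - i)| := Finset.abs_sum_le_sum_abs _ _
    _ ≤ ∑ i ∈ Finset.range j, ρ ^ (j - 1) := by
        apply Finset.sum_le_sum
        intro i hi
        have hij : i < j := Finset.mem_range.1 hi
        rw [abs_of_nonneg (mul_nonneg (pow_nonneg hx _) (pow_nonneg hy _))]
        calc x ^ i * y ^ (j - 1 - i) ≤ ρ ^ i * ρ ^ (j - 1 - i) :=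
              mul_le_mul (pow_le_pow_left₀ hx hx' i) (pow_le_pow_left₀ hy hy' _)
                (pow_nonneg hy _) (pow_nonneg (hx.trans hx') _)
          _ = ρ ^ (j - 1) := by rw [← pow_add]; congr 1; omega
    _ = (j : ℝ) * ρ ^ (j - 1) := by
        rw [Finset.sum_const, Finset.card_range, nsmul_eq_mul]

lemma W_diff_le {r d d₀ : ℝ} (hr : 1 < r) (hd : r < d) (hd₀ : r < d₀) (j : ℕ) :
    |W d j - W d₀ j| ≤ ((1 : ℝ) + j * r) * (1 / r) ^ j * |d - d₀| := by
  have hr0 : (0:ℝ) < r := by linarith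
  have hd0 : (0:ℝ) < d := by linarith
  have hd₀0 : (0:ℝ) < d₀ := by linarith
  have hβr : 1 / d ≤ 1 / r := one_div_le_one_div_of_le hr0 hd.le
  have hβ₀r : 1 / d₀ ≤ 1 / r := one_div_le_one_div_of_le hr0 hd₀.le
  have hβ0 : (0:ℝ) ≤ 1 / d := by positivity
  have hβ₀0 : (0:ℝ) ≤ 1 / d₀ := by positivity
  have hinv : |1 / d - 1 / d₀| ≤ |d - d₀| := by
    rw [show 1 / d - 1 / d₀ = (d₀ - d) / (d * d₀) from by field_simp, abs_div,
      abs_of_pos (mul_pos hd0 hd₀0), abs_sub_comm]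
    apply div_le_self (abs_nonneg _)
    nlinarith
  have hsplit : W d j - W d₀ j
      = ((1 / d₀) - (1 / d)) * (1 / d) ^ j + (1 - 1 / d₀) * ((1 / d) ^ j - (1 / d₀) ^ j) := by
    rw [W_eq hd0, W_eq hd₀0]
    rw [show (d - 1) / d = 1 - 1 / d from by field_simp,
      show (d₀ - 1) / d₀ = 1 - 1 / d₀ from by field_simp]
    ring
  have hpow := pow_abs_sub_le hβ0 hβr hβ₀0 hβ₀r j
  have hjrho : (j : ℝ) * (1 / r) ^ (j - 1) ≤ (j : ℝ) * r * (1 / r) ^ j := by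
    cases j with
    | zero => simp
    | succ n =>
        have e : r * (1 / r) ^ (n + 1) = (1 / r) ^ n := by
          rw [pow_succ]; field_simp
        rw [Nat.add_sub_cancel, mul_assoc, e]
  have h1 : |(1 / d₀) - (1 / d)| ≤ |d - d₀| := by rw [abs_sub_comm]; exact hinv
  have hθ₀0 : (0:ℝ) ≤ 1 - 1 / d₀ := by
    have : 1 / d₀ ≤ 1 := by rw [div_le_one hd₀0]; linarith
    linarith
  have hθ₀1 : 1 - 1 / d₀ ≤ 1 := by linarith
  calc |W d j - W d₀ j|
      = |((1 / d₀) - (1 / d)) * (1 / d) ^ j + (1 - 1 / d₀) * ((1 / d) ^ j - (1 / d₀) ^ j)| := by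
        rw [hsplit]
    _ ≤ |((1 / d₀) - (1 / d)) * (1 / d) ^ j| + |(1 - 1 / d₀) * ((1 / d) ^ j - (1 / d₀) ^ j)| :=
        abs_add_le _ _
    _ = |(1 / d₀) - (1 / d)| * (1 / d) ^ j + (1 - 1 / d₀) * |(1 / d) ^ j - (1 / d₀) ^ j| := by
        rw [abs_mul, abs_mul, abs_of_nonneg (pow_nonneg hβ0 j), abs_of_nonneg hθ₀0]
    _ ≤ |d - d₀| * (1 / r) ^ j + 1 * ((j : ℝ) * (1 / r) ^ (j - 1) * |1 / d - 1 / d₀|) := by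
        apply add_le_add
        · exact mul_le_mul h1 (pow_le_pow_left₀ hβ0 hβr j) (pow_nonneg hβ0 j) (abs_nonneg _)
        · exact mul_le_mul hθ₀1 hpow (abs_nonneg _) zero_le_one
    _ ≤ |d - d₀| * (1 / r) ^ j + ((j : ℝ) * r * (1 / r) ^ j) * |d - d₀| := by
        rw [one_mul]
        apply add_le_add_right
        calc (j : ℝ) * (1 / r) ^ (j - 1) * |1 / d - 1 / d₀|
            ≤ ((j : ℝ) * r * (1 / r) ^ j) * |1 / d - 1 / d₀| :=
              mul_le_mul_of_nonneg_right hjrho (abs_nonneg _)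
          _ ≤ ((j : ℝ) * r * (1 / r) ^ j) * |d - d₀| := by
              apply mul_le_mul_of_nonneg_left hinv
              positivity
    _ = ((1 : ℝ) + j * r) * (1 / r) ^ j * |d - d₀| := by ring

lemma summable_maj {r : ℝ} (hr : 1 < r) :
    Summable (fun j : ℕ => ((1 : ℝ) + j * r) * (1 / r) ^ j) := by
  have hρ0 : (0:ℝ) ≤ 1 / r := by positivity
  have hρ1 : 1 / r < 1 := by rw [div_lt_one (by linarith)]; linarith
  have h1 : Summable (fun j : ℕ => (1 / r) ^ j) := summable_geometric_of_lt_one hρ0 hρ1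
  have h2 : Summable (fun j : ℕ => (j : ℝ) * (1 / r) ^ j) := by
    have := summable_pow_mul_geometric_of_norm_lt_one (R := ℝ) 1 (r := 1 / r)
      (by rw [Real.norm_eq_abs, abs_of_nonneg hρ0]; exact hρ1)
    exact this.congr fun j => by rw [pow_one]
  have := h1.add (h2.mul_right r)
  exact this.congr fun j => by ring

noncomputable def Cc (r : ℝ) : ℝ := ∑' j : ℕ, ((1 : ℝ) + j * r) * (1 / r) ^ j

lemma summable_W_diff {d d₀ : ℝ} (hd : 1 < d) (hd₀ : 1 < d₀) :
    Summable (fun j => |W d j - W d₀ j|) := by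
  apply Summable.of_norm_bounded (g := fun j => W d j + W d₀ j)
    ((summable_W hd).add (summable_W hd₀))
  intro j
  rw [Real.norm_eq_abs, abs_abs]
  calc |W d j - W d₀ j| ≤ |W d j| + |W d₀ j| := abs_sub _ _
    _ = W d j + W d₀ j := by
        rw [abs_of_nonneg (W_nonneg hd j), abs_of_nonneg (W_nonneg hd₀ j)]

lemma tsum_W_diff_le {r d d₀ : ℝ} (hr : 1 < r) (hd : r < d) (hd₀ : r < d₀) :
    ∑' j, |W d j - W d₀ j| ≤ Cc r * |d - d₀| := by
  have hd1 : 1 < d := by linarith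
  have hd₀1 : 1 < d₀ := by linarith
  calc ∑' j, |W d j - W d₀ j|
      ≤ ∑' j : ℕ, ((1 : ℝ) + j * r) * (1 / r) ^ j * |d - d₀| := by
        apply Summable.tsum_le_tsum (fun j => W_diff_le hr hd hd₀ j) (summable_W_diff hd1 hd₀1)
          ((summable_maj hr).mul_right _)
    _ = Cc r * |d - d₀| := by rw [tsum_mul_right]; rfl



lemma Cc_nonneg {r : ℝ} (hr : 1 < r) : 0 ≤ Cc r :=
  tsum_nonneg fun j => by positivity

lemma Pinf_le_Pinf_add [Nonempty A] {E : Matrix A A ℝ} {d d₀ : ℝ}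
    (hE : AssumptionA E) (hd : 1 < d) (hd₀ : 1 < d₀) :
    Pinf E d ≤ Pinf E d₀ + B E * ∑' j, |W d j - W d₀ j| := by
  obtain ⟨π₀, P₀, hf₀⟩ := exists_feasible hE
  have hne : {x : ℝ | ∃ π P, Feasible E π P ∧ x = Finf E d π P}.Nonempty :=
    ⟨Finf E d π₀ P₀, π₀, P₀, hf₀, rfl⟩
  refine csSup_le hne ?_
  rintro y ⟨π, P, hf, rfl⟩
  have hdiff : Finf E d π P - Finf E d₀ π P = ∑' j, (W d j - W d₀ j) * T E π P (j + 1) := by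
    rw [Finf_eq, Finf_eq, ← Summable.tsum_sub (summable_main hd hE hf) (summable_main hd₀ hE hf)]
    exact tsum_congr fun j => by ring
  have hb : ∀ j, ‖(W d j - W d₀ j) * T E π P (j + 1)‖ ≤ |W d j - W d₀ j| * B E := by
    intro j
    rw [Real.norm_eq_abs, abs_mul]
    exact mul_le_mul_of_nonneg_left (T_bound hE hf (j + 1)) (abs_nonneg _)
  have hs : Summable (fun j => ‖(W d j - W d₀ j) * T E π P (j + 1)‖) :=
    Summable.of_nonneg_of_le (fun _ => norm_nonneg _) hb ((summable_W_diff hd hd₀).mul_right _)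
  have habs : |∑' j, (W d j - W d₀ j) * T E π P (j + 1)|
      ≤ B E * ∑' j, |W d j - W d₀ j| := by
    calc |∑' j, (W d j - W d₀ j) * T E π P (j + 1)|
        = ‖∑' j, (W d j - W d₀ j) * T E π P (j + 1)‖ := (Real.norm_eq_abs _).symm
      _ ≤ ∑' j, ‖(W d j - W d₀ j) * T E π P (j + 1)‖ := norm_tsum_le_tsum_norm hs
      _ ≤ ∑' j, |W d j - W d₀ j| * B E :=
          Summable.tsum_le_tsum hb hs ((summable_W_diff hd hd₀).mul_right _)
      _ = (∑' j, |W d j - W d₀ j|) * B E := tsum_mul_right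
      _ = B E * ∑' j, |W d j - W d₀ j| := mul_comm _ _
  have h1 : Finf E d₀ π P ≤ Pinf E d₀ := Finf_le_Pinf hd₀ hE hf
  have h2 := (abs_le.1 habs).2
  linarith [le_abs_self (∑' j, (W d j - W d₀ j) * T E π P (j + 1))]

end Stmt0Aux

/-- `d ↦ P^{(∞)}(d,E)` is continuous and monotone increasing on `(1,∞)`. -/
theorem stmt0 {A : Type*} [Fintype A] [Nonempty A] (E : Matrix A A ℝ)
    (hE : AssumptionA E) :
    ContinuousOn (fun d : ℝ => Pinf E d) (Set.Ioi 1) ∧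
      MonotoneOn (fun d : ℝ => Pinf E d) (Set.Ioi 1) := by
  open Stmt0Aux in
  constructor
  · -- continuity
    intro d₀ hd₀
    have hd₀1 : (1:ℝ) < d₀ := hd₀
    set r : ℝ := (1 + d₀) / 2 with hrdef
    have hr1 : 1 < r := by rw [hrdef]; linarith
    have hrd₀ : r < d₀ := by rw [hrdef]; linarith
    have hev : ∀ᶠ d in 𝓝 d₀, |Pinf E d - Pinf E d₀| ≤ (B E * Cc r) * |d - d₀| := by
      filter_upwards [Ioi_mem_nhds hrd₀] with d hd
      have hrd : r < d := hd
      have hd1 : 1 < d := hr1.trans hrd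
      have hA := Pinf_le_Pinf_add (E := E) hE hd1 hd₀1
      have hB := Pinf_le_Pinf_add (E := E) hE hd₀1 hd1
      have hΔsym : ∑' j, |W d₀ j - W d j| = ∑' j, |W d j - W d₀ j| :=
        tsum_congr fun j => abs_sub_comm _ _
      have hΔle : ∑' j, |W d j - W d₀ j| ≤ Cc r * |d - d₀| := tsum_W_diff_le hr1 hrd hrd₀
      have hBnn : 0 ≤ B E := B_nonneg E
      have e1 : B E * (∑' j, |W d j - W d₀ j|) ≤ B E * (Cc r * |d - d₀|) :=
        mul_le_mul_of_nonneg_left hΔle hBnn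
      have e2 : B E * (Cc r * |d - d₀|) = (B E * Cc r) * |d - d₀| := by ring
      rw [hΔsym] at hB
      rw [abs_sub_le_iff]
      constructor <;> linarith
    have h0 : Tendsto (fun d : ℝ => (B E * Cc r) * |d - d₀|) (𝓝 d₀) (𝓝 0) := by
      have hcont : Continuous fun d : ℝ => (B E * Cc r) * |d - d₀| := by continuity
      have := hcont.tendsto d₀
      simpa using this
    have htend : Tendsto (fun d : ℝ => Pinf E d - Pinf E d₀) (𝓝 d₀) (𝓝 0) := by
      apply squeeze_zero_norm' _ h0
      filter_upwards [hev] with d hd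
      simpa [Real.norm_eq_abs] using hd
    have hca : ContinuousAt (fun d : ℝ => Pinf E d) d₀ := tendsto_sub_nhds_zero_iff.1 htend
    exact hca.continuousWithinAt
  · -- monotonicity
    intro d hd d' hd' hdd'
    have hd1 : (1:ℝ) < d := hd
    have hd'1 : (1:ℝ) < d' := hd'
    rcases eq_or_lt_of_le hdd' with rfl | hlt
    · exact le_refl _
    · obtain ⟨π₀, P₀, hf₀⟩ := exists_feasible (A := A) hE
      have hne : {x : ℝ | ∃ π P, Feasible E π P ∧ x = Finf E d π P}.Nonempty :=
        ⟨Finf E d π₀ P₀, π₀, P₀, hf₀, rfl⟩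
      refine csSup_le hne ?_
      rintro y ⟨π, P, hf, rfl⟩
      exact Finf_le_Pinf_of_lt hE hd1 hlt hf
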